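/- Let G = (V,E,B) be a directed mixed graph and let P be a partition of its nodes. If a set S ⊆ P of nodes of co(G,P) σ-separates groups Y and Z in co(G,P), then T = ∪_{W∈S} W σ-separates every pair of micro-nodes y ∈ Y, z ∈ Z in G. -/

import Mathlib

/-! ## Mixed graphs -/

/-- A mixed graph: directed, bidirected and undirected edges, no self-edges. -/
structure MixedGraph (V : Type) where
  dir : V → V → Prop
  bidir : V → V → Prop
  undir : V → V → Prop
  bidir_symm : ∀ {a b}, bidir a b → bidir b a
  undir_symm : ∀ {a b}, undir a b → undir b a
  dir_irrefl : ∀ a, ¬ dir a a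
  bidir_irrefl : ∀ a, ¬ bidir a a
  undir_irrefl : ∀ a, ¬ undir a a

namespace MixedGraph

variable {V I : Type}

/-- A directed mixed graph is a mixed graph without undirected edges. -/
def IsDMG (G : MixedGraph V) : Prop := ∀ a b, ¬ G.undir a b

/-- `a` and `b` lie in the same strongly connected component: there are directed
paths between them in both directions. -/
def Strongly (G : MixedGraph V) (a b : V) : Prop :=
  Relation.ReflTransGen G.dir a b ∧ Relation.ReflTransGen G.dir b a

lemma Strongly.refl (G : MixedGraph V) (a : V) : G.Strongly a a :=
  ⟨Relation.ReflTransGen.refl, Relation.ReflTransGen.refl⟩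

lemma Strongly.symm {G : MixedGraph V} {a b : V} (h : G.Strongly a b) : G.Strongly b a :=
  ⟨h.2, h.1⟩

/-- A graph is acyclic if it has no nontrivial directed closed walk. -/
def Acyclic (G : MixedGraph V) : Prop := ∀ a, ¬ Relation.TransGen G.dir a a

end MixedGraph

/-! ## Walks -/

/-- The four ways in which an edge can occur on a walk, as traversed from its
first node `a` to its second node `b`: `fw` is `a → b`, `bw` is `a ← b`,
`bi` is `a ↔ b` and `un` is `a − b`. -/
inductive StepKind | fw | bw | bi | un
deriving DecidableEq

/-- A step of a walk: an ordered pair of nodes together with the kind of edge. -/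
structure Step (V : Type) where
  a : V
  b : V
  k : StepKind

/-- The step is an actual edge of the graph `G`. -/
def Step.ok {V : Type} (G : MixedGraph V) (s : Step V) : Prop :=
  match s.k with
  | .fw => G.dir s.a s.b
  | .bw => G.dir s.b s.a
  | .bi => G.bidir s.a s.b
  | .un => G.undir s.a s.b

/-- The edge of the step has an arrowhead at its first node. -/
def Step.headA {V : Type} (s : Step V) : Prop := s.k = .bw ∨ s.k = .bi

/-- The edge of the step has an arrowhead at its second node. -/
def Step.headB {V : Type} (s : Step V) : Prop := s.k = .fw ∨ s.k = .bi

namespace MixedGraph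

variable {V I : Type}

/-- `IsWalk G x y L`: the list of steps `L` forms a walk from `x` to `y` in `G`. -/
inductive IsWalk (G : MixedGraph V) : V → V → List (Step V) → Prop
  | nil (a : V) : IsWalk G a a []
  | cons {c : V} (s : Step V) (L : List (Step V)) (hok : s.ok G)
      (hw : IsWalk G s.b c L) : IsWalk G s.a c (s :: L)

/-- `v` is a collider at junction `i` of the walk `L`: both edges adjacent to the
inner node `v` point into `v`. -/
def ColliderAt (L : List (Step V)) (i : ℕ) (v : V) : Prop :=
  ∃ s t, L[i]? = some s ∧ L[i+1]? = some t ∧ s.b = v ∧ t.a = v ∧ s.headB ∧ t.headA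

/-- `v` is a non-collider at junction `i` of the walk `L`. -/
def NonColliderAt (L : List (Step V)) (i : ℕ) (v : V) : Prop :=
  ∃ s t, L[i]? = some s ∧ L[i+1]? = some t ∧ s.b = v ∧ t.a = v ∧ ¬ (s.headB ∧ t.headA)

/-- The walk `L` from `x` to `y` is m-blocked by the node set `S`. -/
def MBlockedWalk (G : MixedGraph V) (S : Set V) (x y : V) (L : List (Step V)) : Prop :=
  x ∈ S ∨ y ∈ S ∨
  (∃ i v, ColliderAt L i v ∧ ∀ d, Relation.ReflTransGen G.dir v d → d ∉ S) ∨
  (∃ i v, NonColliderAt L i v ∧ v ∈ S)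

/-- The walk `L` from `x` to `y` is σ-blocked by the node set `S`. -/
def SigmaBlockedWalk (G : MixedGraph V) (S : Set V) (x y : V) (L : List (Step V)) : Prop :=
  x ∈ S ∨ y ∈ S ∨
  (∃ i v, ColliderAt L i v ∧ ∀ d, Relation.ReflTransGen G.dir v d → d ∉ S) ∨
  (∃ i s t, L[i]? = some s ∧ L[i+1]? = some t ∧ s.b = t.a ∧ ¬ (s.headB ∧ t.headA) ∧
    s.b ∈ S ∧
    (((s.k = .bw ∨ s.k = .un) ∧ ¬ G.Strongly s.b s.a) ∨
     ((t.k = .fw ∨ t.k = .un) ∧ ¬ G.Strongly t.a t.b)))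

/-- `x` and `y` are m-separated by `S` in `G`. -/
def MSep (G : MixedGraph V) (S : Set V) (x y : V) : Prop :=
  ∀ L, G.IsWalk x y L → G.MBlockedWalk S x y L

/-- `x` and `y` are σ-separated by `S` in `G`. -/
def SigmaSep (G : MixedGraph V) (S : Set V) (x y : V) : Prop :=
  ∀ L, G.IsWalk x y L → G.SigmaBlockedWalk S x y L

/-! ## Acyclification -/

/-- The acyclification of a mixed graph. -/
def acy (G : MixedGraph V) : MixedGraph V where
  dir a b := (∃ c, G.dir a c ∧ G.Strongly c b) ∧ ¬ G.Strongly a b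
  bidir a b := a ≠ b ∧ (G.Strongly a b ∨
    ∃ a' b', G.Strongly a a' ∧ G.Strongly b b' ∧ G.bidir a' b')
  undir a b := ¬ G.Strongly a b ∧ G.undir a b
  bidir_symm := by
    rintro a b ⟨hab, h | ⟨a', b', ha, hb, h⟩⟩
    · exact ⟨hab.symm, Or.inl h.symm⟩
    · exact ⟨hab.symm, Or.inr ⟨b', a', hb, ha, G.bidir_symm h⟩⟩
  undir_symm := by
    rintro a b ⟨h1, h2⟩
    exact ⟨fun h => h1 h.symm, G.undir_symm h2⟩
  dir_irrefl := fun a h => h.2 (Strongly.refl G a)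
  bidir_irrefl := fun a h => h.1 rfl
  undir_irrefl := fun a h => h.1 (Strongly.refl G a)

/-! ## Coarse graphs -/

/-- The coarse (quotient) graph of `G` with respect to the partition given by the
quotient map `q` onto the set of groups `I`. -/
def coarse (G : MixedGraph V) (q : V → I) : MixedGraph I where
  dir Y Z := Y ≠ Z ∧ ∃ y z, q y = Y ∧ q z = Z ∧ G.dir y z
  bidir Y Z := Y ≠ Z ∧ ∃ y z, q y = Y ∧ q z = Z ∧ G.bidir y z
  undir Y Z := Y ≠ Z ∧ ∃ y z, q y = Y ∧ q z = Z ∧ G.undir y z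
  bidir_symm := by
    rintro Y Z ⟨hne, y, z, hy, hz, h⟩
    exact ⟨hne.symm, z, y, hz, hy, G.bidir_symm h⟩
  undir_symm := by
    rintro Y Z ⟨hne, y, z, hy, hz, h⟩
    exact ⟨hne.symm, z, y, hz, hy, G.undir_symm h⟩
  dir_irrefl := fun Y h => h.1 rfl
  bidir_irrefl := fun Y h => h.1 rfl
  undir_irrefl := fun Y h => h.1 rfl

end MixedGraph

namespace SigmaAux

open MixedGraph

variable {V I : Type}

/-- `s` and `t` occur consecutively (in this order) on the list `L`. -/
def AdjL {α : Type} (L : List α) (s t : α) : Prop := ∃ p r, L = p ++ s :: t :: r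

lemma adjL_of_getElem {α : Type} {L : List α} {s t : α} :
    ∀ {i : ℕ}, L[i]? = some s → L[i+1]? = some t → AdjL L s t := by
  induction L with
  | nil => intro i h1 _; simp at h1
  | cons a L ih =>
    intro i h1 h2
    cases i with
    | zero =>
      simp at h1
      subst h1
      cases L with
      | nil => simp at h2
      | cons b L' =>
        simp at h2
        subst h2
        exact ⟨[], L', rfl⟩
    | succ n =>
      simp only [List.getElem?_cons_succ] at h1 h2
      obtain ⟨p, r, hpr⟩ := ih h1 h2
      exact ⟨a :: p, r, by simp [hpr]⟩

lemma getElem_of_adjL {α : Type} {L : List α} {s t : α} (h : AdjL L s t) :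
    ∃ i, L[i]? = some s ∧ L[i+1]? = some t := by
  obtain ⟨p, r, rfl⟩ := h
  refine ⟨p.length, ?_, ?_⟩
  · rw [List.getElem?_append_right le_rfl]
    simp
  · rw [List.getElem?_append_right (Nat.le_succ_of_le le_rfl)]
    simp

lemma adjL_infix {α : Type} {L M : List α} {s t : α} (h : AdjL M s t)
    (hinf : M <:+: L) : AdjL L s t := by
  obtain ⟨p, r, rfl⟩ := h
  obtain ⟨u, w, rfl⟩ := hinf
  exact ⟨u ++ p, r ++ w, by simp⟩

lemma chain'_of_adjL {α : Type} {R : α → α → Prop} {L : List α} {s t : α}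
    (hc : List.Chain' R L) (h : AdjL L s t) : R s t := by
  obtain ⟨p, r, rfl⟩ := h
  have : List.Chain' R [s, t] := hc.infix ⟨p, r, by simp⟩
  exact List.isChain_pair.mp this

lemma isWalk_head {G : MixedGraph V} {x y : V} {s : Step V} {L : List (Step V)}
    (h : G.IsWalk x y (s :: L)) : s.a = x := by
  cases h; rfl

lemma isWalk_chain {G : MixedGraph V} {x y : V} {L : List (Step V)}
    (h : G.IsWalk x y L) : List.Chain' (fun u w : Step V => u.b = w.a) L := by
  induction h with
  | nil => exact List.isChain_nil
  | cons s L hok hw ih =>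
    refine List.isChain_cons.mpr ⟨?_, ih⟩
    intro w hw'
    cases L with
    | nil => simp at hw'
    | cons e L' =>
      simp at hw'
      subst hw'
      exact (isWalk_head hw).symm

lemma isWalk_mem_ok {G : MixedGraph V} {x y : V} {L : List (Step V)}
    (h : G.IsWalk x y L) : ∀ s ∈ L, s.ok G := by
  induction h with
  | nil => simp
  | cons s L hok hw ih =>
    intro e he
    rcases List.mem_cons.mp he with rfl | he
    · exact hok
    · exact ih e he

lemma step_ne_un {G : MixedGraph V} (hDMG : G.IsDMG) {s : Step V}
    (hok : s.ok G) : s.k ≠ .un := by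
  intro h
  unfold Step.ok at hok
  rw [h] at hok
  exact hDMG _ _ hok

/-- The coarse image of a step. -/
def cstep (q : V → I) (s : Step V) : Step I := ⟨q s.a, q s.b, s.k⟩

open Classical in
/-- Contraction of a micro walk: drop the internal steps, coarsen the rest. -/
noncomputable def cmap (q : V → I) (L : List (Step V)) : List (Step I) :=
  L.foldr (fun s acc => if q s.a = q s.b then acc else cstep q s :: acc) []

lemma cmap_nil (q : V → I) : cmap q ([] : List (Step V)) = [] := rfl

open Classical in
lemma cmap_cons (q : V → I) (s : Step V) (L : List (Step V)) :
    cmap q (s :: L) = if q s.a = q s.b then cmap q L else cstep q s :: cmap q L := rfl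

lemma cmap_isWalk {G : MixedGraph V} (hDMG : G.IsDMG) (q : V → I)
    {x y : V} {L : List (Step V)} (h : G.IsWalk x y L) :
    (G.coarse q).IsWalk (q x) (q y) (cmap q L) := by
  induction h with
  | nil => exact .nil _
  | cons s L hok hw ih =>
    by_cases hqs : q s.a = q s.b
    · rw [cmap_cons, if_pos hqs, hqs]
      exact ih
    · rw [cmap_cons, if_neg hqs]
      have hok' : (cstep q s).ok (G.coarse q) := by
        have hq' : q s.b ≠ q s.a := fun h => hqs h.symm
        cases hk : s.k
        all_goals simp only [Step.ok, cstep, hk] at hok ⊢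
        · exact ⟨hqs, s.a, s.b, rfl, rfl, hok⟩
        · exact ⟨hq', s.b, s.a, rfl, rfl, hok⟩
        · exact ⟨hqs, s.a, s.b, rfl, rfl, hok⟩
        · exact absurd hok (hDMG _ _)
      exact .cons (cstep q s) _ hok' ih

lemma desc_proj (G : MixedGraph V) (q : V → I) {a b : V}
    (h : Relation.ReflTransGen G.dir a b) :
    Relation.ReflTransGen (G.coarse q).dir (q a) (q b) := by
  induction h with
  | refl => exact .refl
  | tail h1 h2 ih =>
    rename_i b c
    by_cases hq : q b = q c
    · rwa [← hq]
    · exact ih.tail ⟨hq, b, c, rfl, rfl, h2⟩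

lemma strongly_proj {G : MixedGraph V} (q : V → I) {a b : V}
    (h : G.Strongly a b) : (G.coarse q).Strongly (q a) (q b) :=
  ⟨desc_proj G q h.1, desc_proj G q h.2⟩

lemma cmap_append_split (q : V → I) :
    ∀ (L : List (Step V)) (A B : List (Step I)), cmap q L = A ++ B →
      ∃ L1 L2, L = L1 ++ L2 ∧ cmap q L1 = A ∧ cmap q L2 = B := by
  intro L
  induction L with
  | nil =>
    intro A B h
    rw [cmap_nil] at h
    obtain ⟨hA, hB⟩ := List.append_eq_nil_iff.mp h.symm
    exact ⟨[], [], rfl, by rw [cmap_nil, hA], by rw [cmap_nil, hB]⟩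
  | cons s L ih =>
    intro A B h
    by_cases hqs : q s.a = q s.b
    · rw [cmap_cons, if_pos hqs] at h
      obtain ⟨L1, L2, rfl, h1, h2⟩ := ih A B h
      exact ⟨s :: L1, L2, rfl, by rw [cmap_cons, if_pos hqs, h1], h2⟩
    · rw [cmap_cons, if_neg hqs] at h
      cases A with
      | nil =>
        exact ⟨[], s :: L, rfl, rfl, by rw [cmap_cons, if_neg hqs]; exact h⟩
      | cons σ A' =>
        simp only [List.cons_append, List.cons.injEq] at h
        obtain ⟨rfl, h⟩ := h
        obtain ⟨L1, L2, rfl, h1, h2⟩ := ih A' B h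
        exact ⟨s :: L1, L2, rfl, by rw [cmap_cons, if_neg hqs, h1], h2⟩

lemma cmap_cons_split (q : V → I) :
    ∀ (L : List (Step V)) (σ : Step I) (rest : List (Step I)),
      cmap q L = σ :: rest →
      ∃ p s L', L = p ++ s :: L' ∧ (∀ e ∈ p, q e.a = q e.b) ∧
        q s.a ≠ q s.b ∧ cstep q s = σ ∧ cmap q L' = rest := by
  intro L
  induction L with
  | nil => intro σ rest h; rw [cmap_nil] at h; exact absurd h (by simp)
  | cons s L ih =>
    intro σ rest h
    by_cases hqs : q s.a = q s.b
    · rw [cmap_cons, if_pos hqs] at h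
      obtain ⟨p, s', L', rfl, hp, h1, h2, h3⟩ := ih σ rest h
      exact ⟨s :: p, s', L', rfl, by
        intro e he
        rcases List.mem_cons.mp he with rfl | he
        · exact hqs
        · exact hp e he, h1, h2, h3⟩
    · rw [cmap_cons, if_neg hqs] at h
      injection h with h1 h2
      exact ⟨[], s, L, rfl, by simp, hqs, h1, h2⟩

/-- Scanning lemma: on a segment starting with an arrowhead into group `W`,
passing through internal steps of `W`, and ending with an arrowhead out of `W`,
there is a collider whose node lies in `W`. -/
lemma scan (q : V → I) {W : I} :
    ∀ (M : List (Step V)) (s t : Step V),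
      s.headB → t.headA → q s.b = W →
      (∀ e ∈ M, q e.a = q e.b) →
      List.Chain' (fun u w : Step V => u.b = w.a) (s :: M ++ [t]) →
      (∀ e ∈ M, e.k ≠ .un) →
      ∃ u w, AdjL (s :: M ++ [t]) u w ∧ u.headB ∧ w.headA ∧ q u.b = W := by
  intro M
  induction M with
  | nil =>
    intro s t hsB htA hsb _ _ _
    exact ⟨s, t, ⟨[], [], rfl⟩, hsB, htA, hsb⟩
  | cons e M' ih =>
    intro s t hsB htA hsb hint hchain hun
    by_cases heA : e.headA
    · exact ⟨s, e, ⟨[], M' ++ [t], rfl⟩, hsB, heA, hsb⟩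
    · have hek : e.k = .fw := by
        have h1 := hun e (by simp)
        cases hk : e.k
        · rfl
        · exact absurd (Or.inl hk) heA
        · exact absurd (Or.inr hk) heA
        · exact absurd hk h1
      have heB : e.headB := Or.inl hek
      have hch : s.b = e.a ∧ List.Chain' (fun u w : Step V => u.b = w.a) (e :: (M' ++ [t])) := by
        have h' : List.IsChain (fun u w : Step V => u.b = w.a) (s :: e :: (M' ++ [t])) := hchain
        exact List.isChain_cons_cons.mp h'
      have hse : s.b = e.a := hch.1
      have heb : q e.b = W := by
        rw [← hint e (by simp), ← hse, hsb]
      have hchain' : List.Chain' (fun u w : Step V => u.b = w.a) (e :: M' ++ [t]) := hch.2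
      obtain ⟨u, w, hadj, h1, h2, h3⟩ := ih e t heB htA heb
        (fun e' he' => hint e' (by simp [he'])) hchain'
        (fun e' he' => hun e' (by simp [he']))
      refine ⟨u, w, ?_, h1, h2, h3⟩
      exact adjL_infix hadj ⟨[s], [], by simp⟩

lemma cstep_a {q : V → I} {s : Step V} {σ : Step I} (h : cstep q s = σ) :
    q s.a = σ.a := by rw [← h]; rfl

lemma cstep_b {q : V → I} {s : Step V} {σ : Step I} (h : cstep q s = σ) :
    q s.b = σ.b := by rw [← h]; rfl

lemma cstep_k {q : V → I} {s : Step V} {σ : Step I} (h : cstep q s = σ) :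
    s.k = σ.k := by rw [← h]; rfl

end SigmaAux

open MixedGraph in
/-- Let `G` be a directed mixed graph and `q` the quotient map of a
partition of its nodes. If a set `S` of groups σ-separates the groups `Y` and `Z`
in the coarse graph, then the union `T = q ⁻¹' S` of the groups in `S` σ-separates
every pair of micro-nodes `y ∈ Y`, `z ∈ Z` in `G`. -/
theorem sigmaSep_of_coarse_sigmaSep {V I : Type} (G : MixedGraph V)
    (hDMG : G.IsDMG) (q : V → I) (hq : Function.Surjective q)
    (Y Z : I) (S : Set I) (hsep : (G.coarse q).SigmaSep S Y Z) :
    ∀ y z, q y = Y → q z = Z → G.SigmaSep (q ⁻¹' S) y z := by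
  intro y z hY hZ L hL
  have hcw : (G.coarse q).IsWalk Y Z (SigmaAux.cmap q L) := by
    have := SigmaAux.cmap_isWalk hDMG q hL
    rwa [hY, hZ] at this
  rcases hsep (SigmaAux.cmap q L) hcw with hb | hb |
      ⟨i, W, ⟨σ, τ, hgi, hgi1, hσb, hτa, hσB, hτA⟩, hdesc⟩ |
      ⟨i, σ, τ, hgi, hgi1, hστ, hncol, hmemS, hdir⟩
  · exact Or.inl (by simp only [Set.mem_preimage, hY]; exact hb)
  · exact Or.inr (Or.inl (by simp only [Set.mem_preimage, hZ]; exact hb))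
  · -- collider in the coarse walk
    obtain ⟨p', r', hP⟩ := SigmaAux.adjL_of_getElem hgi hgi1
    obtain ⟨L1, L2, rfl, -, h2⟩ := SigmaAux.cmap_append_split q L p' (σ :: τ :: r') hP
    obtain ⟨p1, s, L'', rfl, hp1, hsx, hcs, h3⟩ := SigmaAux.cmap_cons_split q L2 σ _ h2
    obtain ⟨p2, t, L''', rfl, hp2, htx, hct, -⟩ := SigmaAux.cmap_cons_split q L'' τ _ h3
    have hchain := SigmaAux.isWalk_chain hL
    have hOK := SigmaAux.isWalk_mem_ok hL
    have hinf : (s :: p2 ++ [t]) <:+: (L1 ++ (p1 ++ s :: (p2 ++ t :: L'''))) :=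
      ⟨L1 ++ p1, L''', by simp⟩
    have hsB : s.headB := by
      unfold Step.headB
      rw [SigmaAux.cstep_k hcs]
      exact hσB
    have htA : t.headA := by
      unfold Step.headA
      rw [SigmaAux.cstep_k hct]
      exact hτA
    have hsbW : q s.b = W := by rw [SigmaAux.cstep_b hcs, hσb]
    obtain ⟨u, w, hadj, huB, hwA, hub⟩ := SigmaAux.scan q p2 s t hsB htA hsbW hp2
      (hchain.infix hinf)
      (fun e he => SigmaAux.step_ne_un hDMG (hOK e (by simp [he])))
    have hadjL := SigmaAux.adjL_infix hadj hinf
    have huw : u.b = w.a := SigmaAux.chain'_of_adjL (R := fun u w : Step V => u.b = w.a) hchain hadjL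
    obtain ⟨j, hj1, hj2⟩ := SigmaAux.getElem_of_adjL hadjL
    refine Or.inr (Or.inr (Or.inl ⟨j, u.b, ⟨u, w, hj1, hj2, rfl, huw.symm, huB, hwA⟩, ?_⟩))
    intro d hd hdS
    have hproj := SigmaAux.desc_proj G q hd
    rw [hub] at hproj
    exact hdesc (q d) hproj hdS
  · -- non-collider in the coarse walk
    obtain ⟨p', r', hP⟩ := SigmaAux.adjL_of_getElem hgi hgi1
    obtain ⟨L1, L2, rfl, -, h2⟩ := SigmaAux.cmap_append_split q L p' (σ :: τ :: r') hP
    obtain ⟨p1, s, L'', rfl, hp1, hsx, hcs, h3⟩ := SigmaAux.cmap_cons_split q L2 σ _ h2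
    obtain ⟨p2, t, L''', rfl, hp2, htx, hct, -⟩ := SigmaAux.cmap_cons_split q L'' τ _ h3
    have hchain := SigmaAux.isWalk_chain hL
    have hOK := SigmaAux.isWalk_mem_ok hL
    have hsmem : s ∈ L1 ++ (p1 ++ s :: (p2 ++ t :: L''')) := by simp
    have htmem : t ∈ L1 ++ (p1 ++ s :: (p2 ++ t :: L''')) := by simp
    have hsun : s.k ≠ .un := SigmaAux.step_ne_un hDMG (hOK s hsmem)
    have htun : t.k ≠ .un := SigmaAux.step_ne_un hDMG (hOK t htmem)
    rcases hdir with ⟨hk, hnstr⟩ | ⟨hk, hnstr⟩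
    · -- the left edge of the coarse non-collider leaves it
      have hsk : s.k = .bw := by
        rcases hk with hk | hk
        · rw [SigmaAux.cstep_k hcs]; exact hk
        · exact absurd (by rw [SigmaAux.cstep_k hcs]; exact hk) hsun
      obtain ⟨w, hadjsw⟩ : ∃ w, SigmaAux.AdjL (L1 ++ (p1 ++ s :: (p2 ++ t :: L'''))) s w := by
        cases p2 with
        | nil => exact ⟨t, L1 ++ p1, L''', by simp⟩
        | cons e p2' => exact ⟨e, L1 ++ p1, p2' ++ t :: L''', by simp⟩
      have hsw : s.b = w.a := SigmaAux.chain'_of_adjL (R := fun u w : Step V => u.b = w.a) hchain hadjsw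
      obtain ⟨j, hj1, hj2⟩ := SigmaAux.getElem_of_adjL hadjsw
      refine Or.inr (Or.inr (Or.inr ⟨j, s, w, hj1, hj2, hsw, ?_, ?_, Or.inl ⟨Or.inl hsk, ?_⟩⟩))
      · rintro ⟨hB, -⟩
        rcases hB with h | h <;> rw [hsk] at h <;> exact StepKind.noConfusion h
      · show q s.b ∈ S
        rw [SigmaAux.cstep_b hcs]
        exact hmemS
      · intro h
        have := SigmaAux.strongly_proj q h
        rw [SigmaAux.cstep_b hcs, SigmaAux.cstep_a hcs] at this
        exact hnstr this
    · -- the right edge of the coarse non-collider leaves it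
      have htk : t.k = .fw := by
        rcases hk with hk | hk
        · rw [SigmaAux.cstep_k hct]; exact hk
        · exact absurd (by rw [SigmaAux.cstep_k hct]; exact hk) htun
      have hne : (s :: p2) ≠ [] := by simp
      set u := (s :: p2).getLast hne with hu
      have hdec := List.dropLast_append_getLast hne
      have hadjut : SigmaAux.AdjL (L1 ++ (p1 ++ s :: (p2 ++ t :: L'''))) u t := by
        refine ⟨L1 ++ p1 ++ (s :: p2).dropLast, L''', ?_⟩
        conv_lhs => rw [show s :: (p2 ++ t :: L''') = (s :: p2) ++ t :: L''' by simp, ← hdec]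
        simp [hu]
      have hut : u.b = t.a := SigmaAux.chain'_of_adjL (R := fun u w : Step V => u.b = w.a) hchain hadjut
      obtain ⟨j, hj1, hj2⟩ := SigmaAux.getElem_of_adjL hadjut
      refine Or.inr (Or.inr (Or.inr ⟨j, u, t, hj1, hj2, hut, ?_, ?_, Or.inr ⟨Or.inl htk, ?_⟩⟩))
      · rintro ⟨-, hA⟩
        rcases hA with h | h <;> rw [htk] at h <;> exact StepKind.noConfusion h
      · show u.b ∈ q ⁻¹' S
        have : q t.a ∈ S := by
          rw [SigmaAux.cstep_a hct, ← hστ]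
          exact hmemS
        rw [Set.mem_preimage, hut]
        exact this
      · intro h
        have := SigmaAux.strongly_proj q h
        rw [SigmaAux.cstep_a hct, SigmaAux.cstep_b hct] at this
        exact hnstr this
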